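/- Let k ≥ 2 be an integer such that n > 2^{m·H_2(1/k)}. Then g(n,m) ≤ k·n. -/

import Mathlib

open Finset

/-- `f` assigns each component (indexed by `ι`) to one of `n` classes so that the
components in each class are pairwise disjoint with union `[m]`: every `x ∈ [m]`
lies in exactly one component of each class. -/
def IsResolution {ι : Type*} {m n : ℕ} (C : ι → Finset (Fin m)) (f : ι → Fin n) : Prop :=
  ∀ (i : Fin n) (x : Fin m), ∃! j : ι, f j = i ∧ x ∈ C j

/-- The multiset of nonempty subsets of `[m]` given by `C` is uniquely resolvable
into `n` classes: a resolution exists and is unique up to renaming the classes. -/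
def UniquelyResolvable {ι : Type*} {m : ℕ} (n : ℕ) (C : ι → Finset (Fin m)) : Prop :=
  (∀ j, (C j).Nonempty) ∧ ∃ f : ι → Fin n, IsResolution C f ∧
    ∀ f' : ι → Fin n, IsResolution C f' → ∃ σ : Equiv.Perm (Fin n), f' = σ ∘ f

/-- `g n m` : maximum size of a multiset of nonempty subsets of `[m]` that is
uniquely resolvable into `n` classes. -/
noncomputable def g (n m : ℕ) : ℕ :=
  sSup {k | ∃ C : Fin k → Finset (Fin m), UniquelyResolvable n C}

/-- `P k m` : the largest `N` such that there is a multiset of nonempty subsets of `[m]`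
uniquely resolvable into `N` classes in which every class has size exactly `k`. -/
noncomputable def P (k m : ℕ) : ℕ :=
  sSup {N | ∃ C : Fin N × Fin k → Finset (Fin m),
    UniquelyResolvable N C ∧ IsResolution C Prod.fst}

/-- The binary entropy function. -/
noncomputable def H2 (x : ℝ) : ℝ := -x * Real.logb 2 x - (1 - x) * Real.logb 2 (1 - x)


lemma entropy_sum_bound (m k : ℕ) (hk : 2 ≤ k) :
    ∑ i ∈ Finset.range (m / k + 1), (m.choose i : ℝ)
      ≤ 2 ^ ((m : ℝ) * H2 (1 / (k : ℝ))) := by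
  have hk2 : (2:ℝ) ≤ k := by exact_mod_cast hk
  have hk0 : (0:ℝ) < k := by positivity
  set p : ℝ := 1 / k with hp
  have hp0 : 0 < p := by positivity
  have hp2 : p ≤ 1/2 := by
    rw [hp, div_le_div_iff₀ hk0 (by norm_num)]; linarith
  have hq0 : 0 < 1 - p := by linarith
  -- 2 ^ (m * H2 p) = p ^ (-(m*p)) * (1-p) ^ (-(m*(1-p)))  (rpow)
  have hlogp : (2:ℝ) ^ ((m:ℝ) * (-p * Real.logb 2 p)) = p ^ (-((m:ℝ) * p)) := by
    rw [show (m:ℝ) * (-p * Real.logb 2 p) = Real.logb 2 p * (-((m:ℝ)*p)) by ring,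
      Real.rpow_mul (by norm_num), Real.rpow_logb (by norm_num) (by norm_num) hp0]
  have hlogq : (2:ℝ) ^ ((m:ℝ) * (-(1-p) * Real.logb 2 (1-p))) = (1-p) ^ (-((m:ℝ) * (1-p))) := by
    rw [show (m:ℝ) * (-(1-p) * Real.logb 2 (1-p)) = Real.logb 2 (1-p) * (-((m:ℝ)*(1-p))) by ring,
      Real.rpow_mul (by norm_num), Real.rpow_logb (by norm_num) (by norm_num) hq0]
  have h2H : (2:ℝ) ^ ((m : ℝ) * H2 p) = p ^ (-((m:ℝ) * p)) * (1-p) ^ (-((m:ℝ) * (1-p))) := by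
    rw [H2, show (m:ℝ) * (-p * Real.logb 2 p - (1 - p) * Real.logb 2 (1 - p))
      = (m:ℝ) * (-p * Real.logb 2 p) + (m:ℝ) * (-(1-p) * Real.logb 2 (1-p)) by ring,
      Real.rpow_add (by norm_num), hlogp, hlogq]
  -- key pointwise bound
  have key : ∀ i ∈ Finset.range (m / k + 1),
      (m.choose i : ℝ) ≤ 2 ^ ((m:ℝ) * H2 p) * ((m.choose i : ℝ) * p ^ i * (1-p) ^ (m - i)) := by
    intro i hi
    rw [Finset.mem_range, Nat.lt_succ_iff] at hi
    have him : i ≤ m := le_trans hi (Nat.div_le_self m k)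
    have himp : (i : ℝ) ≤ (m:ℝ) * p := by
      rw [hp, mul_one_div]
      calc (i:ℝ) ≤ ((m/k : ℕ) : ℝ) := by exact_mod_cast hi
        _ ≤ (m:ℝ)/(k:ℝ) := Nat.cast_div_le
    -- show 1 ≤ 2^(mH2) * p^i (1-p)^(m-i)
    have hr0 : 0 < p / (1-p) := by positivity
    have hr1 : p / (1-p) ≤ 1 := by rw [div_le_one hq0]; linarith
    have hmono : (p/(1-p)) ^ ((m:ℝ)*p) ≤ (p/(1-p)) ^ ((i:ℝ)) :=
      Real.rpow_le_rpow_of_exponent_ge hr0 hr1 himp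
    -- p^i (1-p)^(m-i) = (1-p)^m * r^i ; p^(mp) (1-p)^(m(1-p)) = (1-p)^m * r^(mp)
    have e1 : p ^ (i:ℝ) * (1-p) ^ ((m:ℝ) - i) = (1-p) ^ (m:ℝ) * (p/(1-p)) ^ (i:ℝ) := by
      rw [Real.div_rpow hp0.le hq0.le, Real.rpow_sub hq0]
      field_simp
    have e2 : p ^ ((m:ℝ)*p) * (1-p) ^ ((m:ℝ) - (m:ℝ)*p) = (1-p) ^ (m:ℝ) * (p/(1-p)) ^ ((m:ℝ)*p) := by
      rw [Real.div_rpow hp0.le hq0.le, Real.rpow_sub hq0]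
      field_simp
    have hineq : p ^ ((m:ℝ)*p) * (1-p) ^ ((m:ℝ) - (m:ℝ)*p) ≤ p ^ (i:ℝ) * (1-p) ^ ((m:ℝ) - i) := by
      rw [e1, e2]
      exact mul_le_mul_of_nonneg_left hmono (Real.rpow_nonneg hq0.le _)
    have h1 : (1:ℝ) ≤ 2 ^ ((m:ℝ) * H2 p) * (p ^ (i:ℝ) * (1-p) ^ ((m:ℝ) - i)) := by
      rw [h2H]
      have : p ^ (-((m:ℝ) * p)) * (1-p) ^ (-((m:ℝ) * (1-p)))
          * (p ^ ((m:ℝ)*p) * (1-p) ^ ((m:ℝ) - (m:ℝ)*p)) = 1 := by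
        calc p ^ (-((m:ℝ) * p)) * (1-p) ^ (-((m:ℝ) * (1-p)))
            * (p ^ ((m:ℝ)*p) * (1-p) ^ ((m:ℝ) - (m:ℝ)*p))
            = (p ^ (-((m:ℝ)*p)) * p ^ ((m:ℝ)*p)) *
              ((1-p) ^ (-((m:ℝ)*(1-p))) * (1-p) ^ ((m:ℝ)*(1-p))) := by
              rw [show (m:ℝ) - (m:ℝ)*p = (m:ℝ)*(1-p) by ring]; ring
          _ = 1 := by rw [← Real.rpow_add hp0, ← Real.rpow_add hq0]; simp
      calc (1:ℝ) = p ^ (-((m:ℝ) * p)) * (1-p) ^ (-((m:ℝ) * (1-p)))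
          * (p ^ ((m:ℝ)*p) * (1-p) ^ ((m:ℝ) - (m:ℝ)*p)) := this.symm
        _ ≤ _ := by
            apply mul_le_mul_of_nonneg_left hineq
            positivity
    -- convert rpow to pow
    have hconv : p ^ (i:ℝ) * (1-p) ^ ((m:ℝ) - i) = p ^ i * (1-p) ^ (m - i) := by
      rw [show ((m:ℝ) - (i:ℝ)) = ((m - i : ℕ) : ℝ) by push_cast [Nat.cast_sub him]; ring,
        Real.rpow_natCast, Real.rpow_natCast]
    rw [hconv] at h1
    calc (m.choose i : ℝ) = (m.choose i : ℝ) * 1 := by ring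
      _ ≤ (m.choose i : ℝ) * (2 ^ ((m:ℝ) * H2 p) * (p ^ i * (1-p) ^ (m - i))) :=
          mul_le_mul_of_nonneg_left h1 (by positivity)
      _ = 2 ^ ((m:ℝ) * H2 p) * ((m.choose i : ℝ) * p ^ i * (1-p) ^ (m - i)) := by ring
  calc ∑ i ∈ Finset.range (m / k + 1), (m.choose i : ℝ)
      ≤ ∑ i ∈ Finset.range (m / k + 1),
          2 ^ ((m:ℝ) * H2 p) * ((m.choose i : ℝ) * p ^ i * (1-p) ^ (m - i)) :=
        Finset.sum_le_sum key
    _ = 2 ^ ((m:ℝ) * H2 p) * ∑ i ∈ Finset.range (m / k + 1),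
          ((m.choose i : ℝ) * p ^ i * (1-p) ^ (m - i)) := by rw [Finset.mul_sum]
    _ ≤ 2 ^ ((m:ℝ) * H2 p) * ∑ i ∈ Finset.range (m + 1),
          ((m.choose i : ℝ) * p ^ i * (1-p) ^ (m - i)) := by
        apply mul_le_mul_of_nonneg_left _ (by positivity)
        apply Finset.sum_le_sum_of_subset_of_nonneg
        · exact Finset.range_subset_range.mpr (Nat.succ_le_succ (Nat.div_le_self m k))
        · intro i _ _; positivity
    _ = 2 ^ ((m:ℝ) * H2 p) := by
        have hb : ∑ i ∈ Finset.range (m+1), ((m.choose i : ℝ) * p ^ i * (1-p) ^ (m - i)) = 1 := by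
          have h := add_pow p (1-p) m
          rw [show p + (1-p) = (1:ℝ) by ring, one_pow] at h
          rw [show ∑ i ∈ Finset.range (m+1), ((m.choose i:ℝ) * p^i * (1-p)^(m-i))
            = ∑ i ∈ Finset.range (m+1), p^i * (1-p)^(m-i) * (m.choose i:ℝ) from
            Finset.sum_congr rfl (fun i _ => by ring), ← h]
        rw [hb, mul_one]

/-- If `k ≥ 2` and `n > 2 ^ (m · H₂(1/k))`, then `g n m ≤ k n`. -/
theorem stmt13 (m n k : ℕ) (hk : 2 ≤ k)
    (hn : (2 : ℝ) ^ ((m : ℝ) * H2 (1 / (k : ℝ))) < (n : ℝ)) :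
    g n m ≤ k * n := by
  have hk2 : (2:ℝ) ≤ k := by exact_mod_cast hk
  have hk0 : (0:ℝ) < k := by positivity
  -- H2(1/k) ≥ 0, hence n ≥ 2
  have hH0 : 0 ≤ (m:ℝ) * H2 (1 / (k:ℝ)) := by
    apply mul_nonneg (Nat.cast_nonneg m)
    have hp0 : (0:ℝ) < 1/(k:ℝ) := by positivity
    have hp1 : (1:ℝ)/(k:ℝ) ≤ 1 := by rw [div_le_one hk0]; linarith
    have l1 : Real.logb 2 (1/(k:ℝ)) ≤ 0 := Real.logb_nonpos (by norm_num) hp0.le hp1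
    have l2 : Real.logb 2 (1 - 1/(k:ℝ)) ≤ 0 := Real.logb_nonpos (by norm_num) (by linarith) (by linarith)
    have : (0:ℝ) ≤ 1 - 1/(k:ℝ) := by linarith [hp1]
    rw [H2]
    nlinarith
  have h1n : (1:ℝ) < n := by
    calc (1:ℝ) = (2:ℝ) ^ (0:ℝ) := (Real.rpow_zero 2).symm
      _ ≤ (2:ℝ) ^ ((m:ℝ) * H2 (1/(k:ℝ))) := Real.rpow_le_rpow_of_exponent_le (by norm_num) hH0
      _ < n := hn
  have hn2 : 2 ≤ n := by
    have : 1 < n := by exact_mod_cast h1n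
    omega
  apply csSup_le'
  rintro L ⟨C, hne, f, hf, huniq⟩
  by_contra hL
  push_neg at hL
  rcases Nat.eq_zero_or_pos m with hm | hm
  · subst hm
    have h0 : 0 < L := by omega
    obtain ⟨x, _⟩ := hne ⟨0, h0⟩
    exact x.elim0
  set t := m / k with ht
  -- pairwise disjointness within a class
  have hdisj : ∀ a b : Fin L, a ≠ b → f a = f b → Disjoint (C a) (C b) := by
    intro a b hab hfab
    rw [Finset.disjoint_left]
    intro x hxa hxb
    obtain ⟨j0, _, hu⟩ := hf (f a) x
    exact hab ((hu a ⟨rfl, hxa⟩).trans (hu b ⟨hfab.symm, hxb⟩).symm)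
  -- per class at most k-1 big components
  have hclass : ∀ i : Fin n,
      (univ.filter (fun j => f j = i ∧ t < (C j).card)).card ≤ k - 1 := by
    intro i
    by_contra hc
    push_neg at hc
    set T := univ.filter (fun j => f j = i ∧ t < (C j).card) with hT
    have hk_le : k ≤ T.card := by omega
    have hsum : ∑ j ∈ T, (C j).card ≤ m := by
      rw [← Finset.card_biUnion]
      · calc (T.biUnion C).card ≤ (univ : Finset (Fin m)).card :=
            Finset.card_le_card (Finset.subset_univ _)
          _ = m := by simp
      · intro a ha b hb hab
        have ha' := (mem_filter.mp ha).2.1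
        have hb' := (mem_filter.mp hb).2.1
        exact hdisj a b hab (ha'.trans hb'.symm)
    have hlow : k * (t+1) ≤ ∑ j ∈ T, (C j).card := by
      have hb := Finset.card_nsmul_le_sum T (fun j => (C j).card) (t+1)
        (fun j hj => (mem_filter.mp hj).2.2)
      rw [smul_eq_mul] at hb
      calc k * (t+1) ≤ T.card * (t+1) := Nat.mul_le_mul_right _ hk_le
        _ ≤ ∑ j ∈ T, (C j).card := hb
    have hmlt : m < (t+1) * k := (Nat.div_lt_iff_lt_mul (by omega)).mp (Nat.lt_succ_self t)
    rw [mul_comm] at hmlt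
    omega
  -- number of non-small components ≤ n*(k-1)
  have hnonsmall : (univ.filter (fun j : Fin L => t < (C j).card)).card ≤ n * (k-1) := by
    rw [Finset.card_eq_sum_card_fiberwise (f := f) (t := (univ : Finset (Fin n)))
      (fun x _ => mem_univ _)]
    calc ∑ i ∈ (univ : Finset (Fin n)),
          ((univ.filter (fun j : Fin L => t < (C j).card)).filter (fun j => f j = i)).card
        ≤ ∑ i ∈ (univ : Finset (Fin n)), (k-1) := by
          apply Finset.sum_le_sum
          intro i _
          calc ((univ.filter (fun j : Fin L => t < (C j).card)).filter (fun j => f j = i)).card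
              = (univ.filter (fun j : Fin L => f j = i ∧ t < (C j).card)).card := by
                rw [Finset.filter_filter]
                congr 1
                apply Finset.filter_congr
                intro j _
                tauto
            _ ≤ k - 1 := hclass i
      _ = n * (k-1) := by simp [mul_comm]
  -- small components
  set S := univ.filter (fun j : Fin L => ¬ t < (C j).card) with hS
  have hSplit : (univ.filter (fun j : Fin L => t < (C j).card)).card + S.card = L := by
    rw [hS, Finset.card_filter_add_card_filter_not]
    simp
  have hScard : n + 1 ≤ S.card := by
    have hnk : n * (k-1) + n = n * k := by
      rw [← Nat.mul_succ]
      congr 1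
      omega
    have h3 : n * (k-1) + n < L := by
      calc n*(k-1)+n = n*k := hnk
        _ = k*n := mul_comm n k
        _ < L := hL
    generalize n * (k-1) = X at hnonsmall h3
    omega
  -- the collection of small subsets
  set W := (univ : Finset (Finset (Fin m))).filter (fun s => s.card ≤ t) with hW
  have hWcard : (W.card : ℝ) ≤ 2 ^ ((m:ℝ) * H2 (1/(k:ℝ))) := by
    have hWsum : W.card = ∑ i ∈ Finset.range (t+1), m.choose i := by
      rw [Finset.card_eq_sum_card_fiberwise (f := Finset.card) (t := Finset.range (t+1))
        (fun s hs => by rw [Finset.mem_coe, Finset.mem_range, Nat.lt_succ_iff]; exact (mem_filter.mp (Finset.mem_coe.mp hs)).2)]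
      apply Finset.sum_congr rfl
      intro i hi
      rw [Finset.mem_range, Nat.lt_succ_iff] at hi
      have : W.filter (fun s => s.card = i) = Finset.powersetCard i univ := by
        ext s
        rw [mem_filter, hW, mem_filter, Finset.mem_powersetCard_univ]
        constructor
        · exact fun h => h.2
        · exact fun h => ⟨⟨mem_univ _, by omega⟩, h⟩
      rw [this, Finset.card_powersetCard]
      congr 1
      simp
    rw [hWsum]
    push_cast
    exact entropy_sum_bound m k hk
  have hWn : W.card < n := by exact_mod_cast lt_of_le_of_lt hWcard hn
  have hWS : W.card < S.card := by omega
  have hmaps : ∀ j ∈ S, C j ∈ W := by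
    intro j hj
    rw [hW, mem_filter]
    exact ⟨mem_univ _, by have := (mem_filter.mp hj).2; omega⟩
  obtain ⟨j, hj, j', hj', hjj', hCeq⟩ :=
    Finset.exists_ne_map_eq_of_card_lt_of_maps_to hWS hmaps
  have hfne : f j ≠ f j' := by
    intro h
    obtain ⟨x, hx⟩ := hne j
    exact (Finset.disjoint_left.mp (hdisj j j' hjj' h) hx) (hCeq ▸ hx)
  -- swap resolution
  have hCe : ∀ a, C (Equiv.swap j j' a) = C a := by
    intro a
    rcases eq_or_ne a j with rfl|h1
    · rw [Equiv.swap_apply_left]; exact hCeq.symm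
    rcases eq_or_ne a j' with rfl|h2
    · rw [Equiv.swap_apply_right]; exact hCeq
    · rw [Equiv.swap_apply_of_ne_of_ne h1 h2]
  have hres : IsResolution C (f ∘ (Equiv.swap j j')) := by
    intro i x
    obtain ⟨b, ⟨hb1, hb2⟩, hu⟩ := hf i x
    refine ⟨Equiv.swap j j' b, ⟨?_, ?_⟩, ?_⟩
    · show f (Equiv.swap j j' (Equiv.swap j j' b)) = i
      rw [Equiv.swap_apply_self]
      exact hb1
    · rw [hCe b]; exact hb2
    · rintro a ⟨ha1, ha2⟩
      have h4 := hu (Equiv.swap j j' a) ⟨ha1, by rw [hCe a]; exact ha2⟩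
      calc a = Equiv.swap j j' (Equiv.swap j j' a) := (Equiv.swap_apply_self j j' a).symm
        _ = Equiv.swap j j' b := by rw [h4]
  obtain ⟨σ, hσ⟩ := huniq (f ∘ (Equiv.swap j j')) hres
  -- find another member of class f j
  have hsmallj : (C j).card ≤ t := by have := (mem_filter.mp hj).2; omega
  have ht_lt : t < m := Nat.div_lt_self hm (by omega)
  obtain ⟨x, hx⟩ : ∃ x, x ∉ C j := by
    by_contra h
    push_neg at h
    have : (C j).card = m := by
      rw [Finset.eq_univ_iff_forall.mpr h]; simp
    omega
  obtain ⟨a, ⟨ha1, ha2⟩, _⟩ := hf (f j) x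
  have haj : a ≠ j := fun h => hx (h ▸ ha2)
  have haj' : a ≠ j' := by
    intro h
    subst h
    exact hfne ha1.symm
  have hea : Equiv.swap j j' a = a := Equiv.swap_apply_of_ne_of_ne haj haj'
  have h5 := congrFun hσ a
  simp only [Function.comp_apply, Equiv.coe_trans, hea] at h5
  have h6 := congrFun hσ j
  simp only [Function.comp_apply, Equiv.swap_apply_left] at h6
  rw [ha1] at h5
  exact hfne (h6.trans h5.symm).symm
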